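/- Let n ≥ 2, N = n², and let E be the maximally entangled pure state on ℂⁿ⊗ℂⁿ (E = |ψ⟩⟨ψ| with ψ = (1/√n) Σ_{j=1}^{n} e_j⊗e_j). Then every separable state Q on ℂ^N satisfies ‖E − Q‖ ≥ √((n−1)/(n+1)) in Frobenius norm; moreover, the Werner state W(s) = (1−s)·I/N + s·E with s = 1/(1+n) satisfies ‖E − W(s)‖ = √((n−1)/(n+1)). -/

import Mathlib

open Matrix BigOperators ComplexOrder

noncomputable section

/-- The Frobenius inner product `⟨A, B⟩ = Tr(Aᴴ B)`. -/
def frobInner {m : Type*} [Fintype m] (A B : Matrix m m ℂ) : ℂ :=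
  (Aᴴ * B).trace

/-- The Frobenius norm associated to the Frobenius inner product. -/
def frobNorm {m : Type*} [Fintype m] (A : Matrix m m ℂ) : ℝ :=
  Real.sqrt (frobInner A A).re

/-- A state (density matrix): a positive semidefinite (Hermitian) matrix of trace one. -/
def IsState {m : Type*} [Fintype m] (M : Matrix m m ℂ) : Prop :=
  M.PosSemidef ∧ M.trace = 1

/-- A pure state: a rank-one orthogonal projection, i.e. a Hermitian idempotent of trace one. -/
def IsPureState {m : Type*} [Fintype m] (M : Matrix m m ℂ) : Prop :=
  M.IsHermitian ∧ M * M = M ∧ M.trace = 1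

/-- The Kronecker product of two matrices, on the product basis. -/
def prodMat2 {m₁ m₂ : Type*} (A : Matrix m₁ m₁ ℂ) (B : Matrix m₂ m₂ ℂ) :
    Matrix (m₁ × m₂) (m₁ × m₂) ℂ :=
  fun j k => A j.1 k.1 * B j.2 k.2

/-- A pure product state on a bipartite system. -/
def IsPureProductState2 {m₁ m₂ : Type*} [Fintype m₁] [Fintype m₂]
    (M : Matrix (m₁ × m₂) (m₁ × m₂) ℂ) : Prop :=
  ∃ (A : Matrix m₁ m₁ ℂ) (B : Matrix m₂ m₂ ℂ),
    IsPureState A ∧ IsPureState B ∧ M = prodMat2 A B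

/-- A separable state on a bipartite system: a finite convex combination of
pure product states. -/
def IsSeparable2 {m₁ m₂ : Type*} [Fintype m₁] [Fintype m₂]
    (M : Matrix (m₁ × m₂) (m₁ × m₂) ℂ) : Prop :=
  ∃ (k : ℕ) (c : Fin k → ℝ) (P : Fin k → Matrix (m₁ × m₂) (m₁ × m₂) ℂ),
    (∀ i, 0 ≤ c i) ∧ (∑ i, c i) = 1 ∧ (∀ i, IsPureProductState2 (P i)) ∧
      M = ∑ i, (c i : ℂ) • P i

/-- The maximally entangled pure state on `ℂ^{N₁} ⊗ ℂ^{N₂}` (for `N₁ ≤ N₂`):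
`E = |ψ⟩⟨ψ|` with `ψ = (1/√N₁) ∑ j, e j ⊗ e j`. -/
def maxEnt (N₁ N₂ : ℕ) : Matrix (Fin N₁ × Fin N₂) (Fin N₁ × Fin N₂) ℂ :=
  fun x y =>
    (if (x.1 : ℕ) = (x.2 : ℕ) then (((Real.sqrt N₁ : ℝ) : ℂ))⁻¹ else 0) *
      star (if (y.1 : ℕ) = (y.2 : ℕ) then (((Real.sqrt N₁ : ℝ) : ℂ))⁻¹ else 0)

/-- The Werner state `W(s) = (1 - s) I/N + s E` on `ℂⁿ ⊗ ℂⁿ` (`N = n²`), where `E` is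
the maximally entangled pure state `|ψ⟩⟨ψ|`, `ψ = (1/√n) ∑ j, e j ⊗ e j`. -/
def werner (n : ℕ) (s : ℝ) : Matrix (Fin n × Fin n) (Fin n × Fin n) ℂ :=
  (((1 - s) / ((n : ℝ) ^ 2) : ℝ) : ℂ) • (1 : Matrix (Fin n × Fin n) (Fin n × Fin n) ℂ) +
    ((s : ℝ) : ℂ) • maxEnt n n

section Aux
variable {m : Type*} [Fintype m]

def toEuc (A : Matrix m m ℂ) : EuclideanSpace ℂ (m × m) :=
  (WithLp.equiv 2 _).symm (fun p => A p.1 p.2)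

lemma frobInner_eq (A B : Matrix m m ℂ) :
    frobInner A B = inner ℂ (toEuc A) (toEuc B) := by
  simp only [frobInner, Matrix.trace, Matrix.diag, Matrix.mul_apply,
    Matrix.conjTranspose_apply, toEuc, PiLp.inner_apply, RCLike.inner_apply,
    WithLp.equiv_symm_apply, PiLp.toLp_apply, Fintype.sum_prod_type]
  rw [Finset.sum_comm]
  simp [mul_comm]

lemma toEuc_sub (A B : Matrix m m ℂ) : toEuc (A - B) = toEuc A - toEuc B := rfl

lemma frobNorm_eq (A : Matrix m m ℂ) : frobNorm A = ‖toEuc A‖ := by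
  rw [norm_eq_sqrt_re_inner (𝕜 := ℂ), frobNorm, frobInner_eq]; rfl

lemma frobInner_apply (A B : Matrix m m ℂ) :
    frobInner A B = ∑ x, ∑ y, star (A x y) * B x y := by
  rw [frobInner, Matrix.trace]
  simp only [Matrix.diag, Matrix.mul_apply, Matrix.conjTranspose_apply]
  rw [Finset.sum_comm]

lemma frobInner_self_re_nonneg (A : Matrix m m ℂ) : 0 ≤ (frobInner A A).re := by
  rw [frobInner_eq]
  exact inner_self_nonneg (𝕜 := ℂ) (x := toEuc A)

lemma frobInner_sub_left (A B C : Matrix m m ℂ) :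
    frobInner (A - B) C = frobInner A C - frobInner B C := by
  simp [frobInner, Matrix.conjTranspose_sub, Matrix.sub_mul]

lemma frobInner_smul_left (a : ℂ) (A B : Matrix m m ℂ) :
    frobInner (a • A) B = (starRingEnd ℂ) a * frobInner A B := by
  simp [frobInner, Matrix.conjTranspose_smul, Matrix.smul_mul, Matrix.trace_smul]

lemma frobInner_sub_right (A B C : Matrix m m ℂ) :
    frobInner A (B - C) = frobInner A B - frobInner A C := by
  simp [frobInner, Matrix.mul_sub]

lemma frobInner_smul_right (a : ℂ) (A B : Matrix m m ℂ) :
    frobInner A (a • B) = a * frobInner A B := by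
  simp [frobInner, Matrix.mul_smul, Matrix.trace_smul]

lemma frobInner_sum_right {k : ℕ} (A : Matrix m m ℂ) (B : Fin k → Matrix m m ℂ) :
    frobInner A (∑ i, B i) = ∑ i, frobInner A (B i) := by
  simp [frobInner, Matrix.mul_sum]

lemma frobInner_one_left [DecidableEq m] (B : Matrix m m ℂ) :
    frobInner 1 B = B.trace := by
  simp [frobInner]

lemma frobInner_one_one [DecidableEq m] :
    frobInner (1 : Matrix m m ℂ) 1 = (Fintype.card m : ℂ) := by
  simp [frobInner, Matrix.trace_one]

lemma frobInner_self_pure {X : Matrix m m ℂ} (hX : IsPureState X) :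
    frobInner X X = 1 := by
  obtain ⟨h1, h2, h3⟩ := hX
  rw [frobInner, Matrix.IsHermitian.eq h1, h2, h3]

lemma frobNorm_pure {X : Matrix m m ℂ} (hX : IsPureState X) : frobNorm X = 1 := by
  rw [frobNorm, frobInner_self_pure hX]
  simp

/-- overlap of two pure states is in [0,1] -/
lemma pure_overlap {X Y : Matrix m m ℂ} (hX : IsPureState X) (hY : IsPureState Y) :
    0 ≤ (frobInner X Y).re ∧ (frobInner X Y).re ≤ 1 := by
  constructor
  · have key : frobInner X Y = frobInner (X * Y) (X * Y) := by
      rw [frobInner, frobInner, Matrix.conjTranspose_mul,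
        Matrix.IsHermitian.eq hX.1, Matrix.IsHermitian.eq hY.1]
      have e1 : Y * X * (X * Y) = Y * (X * Y) := by
        rw [show Y * X * (X * Y) = Y * (X * X * Y) by noncomm_ring, hX.2.1]
      rw [e1, Matrix.trace_mul_comm Y (X * Y), mul_assoc, hY.2.1]
    rw [key]; exact frobInner_self_re_nonneg _
  · have h1 : (frobInner X Y).re ≤ ‖frobInner X Y‖ := Complex.re_le_norm _
    have h2 : ‖frobInner X Y‖ ≤ frobNorm X * frobNorm Y := by
      rw [frobInner_eq, frobNorm_eq, frobNorm_eq]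
      exact norm_inner_le_norm _ _
    rw [frobNorm_pure hX, frobNorm_pure hY] at h2
    linarith

end Aux

section MaxEntFacts
variable (n : ℕ)

lemma frobInner_conj_symm {m : Type*} [Fintype m] (A B : Matrix m m ℂ) :
    frobInner A B = star (frobInner B A) := by
  rw [frobInner_eq, frobInner_eq, ← inner_conj_symm]
  rfl

lemma sqrt_inv_mul_self (hn : 0 < n) :
    ((((Real.sqrt n)⁻¹ : ℝ) : ℂ)) * ((((Real.sqrt n)⁻¹ : ℝ) : ℂ)) = ((n : ℂ))⁻¹ := by
  rw [← Complex.ofReal_mul, ← mul_inv, Real.mul_self_sqrt (Nat.cast_nonneg n)]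
  push_cast
  ring

lemma maxEnt_entry_star (x y : Fin n × Fin n) :
    star (maxEnt n n x y) = maxEnt n n x y := by
  rw [maxEnt]
  simp only [star_mul', star_star]
  congr 1 <;> · split_ifs <;> simp [← Complex.ofReal_inv, Complex.conj_ofReal]

lemma maxEnt_entry (hn : 0 < n) (x y : Fin n × Fin n) :
    maxEnt n n x y =
      if x.1 = x.2 then (if y.1 = y.2 then ((n : ℂ))⁻¹ else 0) else 0 := by
  rw [maxEnt]
  simp only [Fin.val_eq_val]
  split_ifs <;> simp [← Complex.ofReal_inv, Complex.conj_ofReal] <;>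
    exact sqrt_inv_mul_self n hn

lemma frobInner_maxEnt (hn : 0 < n) (M : Matrix (Fin n × Fin n) (Fin n × Fin n) ℂ) :
    frobInner (maxEnt n n) M = ((n : ℂ))⁻¹ * ∑ i, ∑ j, M (i, i) (j, j) := by
  rw [frobInner_apply]
  have h : ∀ (x y : Fin n × Fin n), star (maxEnt n n x y) * M x y =
      if x.1 = x.2 then (if y.1 = y.2 then ((n : ℂ))⁻¹ * M x y else 0) else 0 := by
    intro x y
    rw [maxEnt_entry_star, maxEnt_entry n hn]
    split_ifs <;> simp
  simp only [h, Fintype.sum_prod_type]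
  simp only [Finset.sum_ite_irrel, Finset.sum_const_zero, Finset.sum_ite_eq,
    Finset.mem_univ, if_true]
  rw [Finset.mul_sum]
  congr 1; ext i
  rw [Finset.mul_sum]

lemma frobInner_maxEnt_one (hn : 0 < n) :
    frobInner (maxEnt n n) (1 : Matrix (Fin n × Fin n) (Fin n × Fin n) ℂ) = 1 := by
  rw [frobInner_maxEnt n hn]
  have : ∀ i j : Fin n, (1 : Matrix (Fin n × Fin n) (Fin n × Fin n) ℂ) (i, i) (j, j)
      = if i = j then 1 else 0 := by
    intro i j
    by_cases h : i = j <;> simp [Matrix.one_apply, Prod.ext_iff, h]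
  simp only [this, Finset.sum_ite_eq, Finset.mem_univ, if_true]
  simp [Finset.card_univ]
  field_simp

lemma trace_maxEnt (hn : 0 < n) : (maxEnt n n).trace = 1 := by
  rw [← frobInner_one_left, frobInner_conj_symm, frobInner_maxEnt_one n hn, star_one]

lemma frobInner_maxEnt_self (hn : 0 < n) :
    frobInner (maxEnt n n) (maxEnt n n) = 1 := by
  rw [frobInner_maxEnt n hn]
  have : ∀ i j : Fin n, maxEnt n n (i, i) (j, j) = ((n : ℂ))⁻¹ := by
    intro i j; rw [maxEnt_entry n hn]; simp
  simp only [this, Finset.sum_const, Finset.card_univ, Fintype.card_fin, nsmul_eq_mul]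
  have hn' : (n : ℂ) ≠ 0 := Nat.cast_ne_zero.mpr hn.ne'
  field_simp

end MaxEntFacts

section SepFacts
variable (n : ℕ)

lemma IsPureState_transpose {m : Type*} [Fintype m] {B : Matrix m m ℂ}
    (hB : IsPureState B) : IsPureState Bᵀ := by
  obtain ⟨h1, h2, h3⟩ := hB
  refine ⟨?_, ?_, ?_⟩
  · exact h1.transpose
  · rw [← Matrix.transpose_mul, h2]
  · rw [Matrix.trace_transpose, h3]

lemma frobInner_herm_transpose {m : Type*} [Fintype m] {A B : Matrix m m ℂ}
    (hA : A.IsHermitian) : frobInner A Bᵀ = ∑ i, ∑ j, A i j * B i j := by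
  rw [frobInner_apply]
  have h : ∀ i j, star (A i j) = A j i := by
    intro i j
    conv_rhs => rw [← hA.eq]
    simp [Matrix.conjTranspose_apply]
  simp only [h, Matrix.transpose_apply]
  rw [Finset.sum_comm]

lemma maxEnt_overlap (hn : 0 < n) {P : Matrix (Fin n × Fin n) (Fin n × Fin n) ℂ}
    (hP : IsPureProductState2 P) :
    0 ≤ (frobInner (maxEnt n n) P).re ∧ (frobInner (maxEnt n n) P).re ≤ (n : ℝ)⁻¹ := by
  obtain ⟨A, B, hA, hB, rfl⟩ := hP
  have hsum : ∑ i, ∑ j, (prodMat2 A B) (i, i) (j, j) = frobInner A Bᵀ := by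
    rw [frobInner_herm_transpose hA.1]
    rfl
  have hmain : frobInner (maxEnt n n) (prodMat2 A B) = ((n : ℂ))⁻¹ * frobInner A Bᵀ := by
    rw [frobInner_maxEnt n hn, hsum]
  have hre : (frobInner (maxEnt n n) (prodMat2 A B)).re
      = (n : ℝ)⁻¹ * (frobInner A Bᵀ).re := by
    rw [hmain, show ((n : ℂ))⁻¹ = (((n : ℝ)⁻¹ : ℝ) : ℂ) by push_cast; ring,
      Complex.re_ofReal_mul]
  obtain ⟨hlo, hhi⟩ := pure_overlap hA (IsPureState_transpose hB)
  have hn' : (0:ℝ) ≤ (n : ℝ)⁻¹ := by positivity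
  constructor
  · rw [hre]; positivity
  · rw [hre]
    calc (n : ℝ)⁻¹ * (frobInner A Bᵀ).re ≤ (n : ℝ)⁻¹ * 1 :=
      mul_le_mul_of_nonneg_left hhi hn'
    _ = (n : ℝ)⁻¹ := mul_one _

lemma trace_prodMat2 {m₁ m₂ : Type*} [Fintype m₁] [Fintype m₂]
    (A : Matrix m₁ m₁ ℂ) (B : Matrix m₂ m₂ ℂ) :
    (prodMat2 A B).trace = A.trace * B.trace := by
  rw [Matrix.trace, Matrix.trace, Matrix.trace, Finset.sum_mul_sum]
  simp [Matrix.diag, prodMat2, Fintype.sum_prod_type]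

lemma trace_pureProduct {m₁ m₂ : Type*} [Fintype m₁] [Fintype m₂]
    {P : Matrix (m₁ × m₂) (m₁ × m₂) ℂ} (hP : IsPureProductState2 P) :
    P.trace = 1 := by
  obtain ⟨A, B, hA, hB, rfl⟩ := hP
  rw [trace_prodMat2, hA.2.2, hB.2.2, one_mul]

lemma sep_trace {n : ℕ} {Q : Matrix (Fin n × Fin n) (Fin n × Fin n) ℂ}
    (hQ : IsSeparable2 Q) : Q.trace = 1 := by
  obtain ⟨k, c, P, hc, hsum, hP, rfl⟩ := hQ
  rw [Matrix.trace_sum]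
  simp only [Matrix.trace_smul, smul_eq_mul]
  have : ∀ i, (c i : ℂ) * (P i).trace = (c i : ℂ) := by
    intro i; rw [trace_pureProduct (hP i), mul_one]
  rw [Finset.sum_congr rfl (fun i _ => this i), ← Complex.ofReal_sum, hsum,
    Complex.ofReal_one]

lemma sep_overlap (hn : 0 < n) {Q : Matrix (Fin n × Fin n) (Fin n × Fin n) ℂ}
    (hQ : IsSeparable2 Q) : (frobInner (maxEnt n n) Q).re ≤ (n : ℝ)⁻¹ := by
  obtain ⟨k, c, P, hc, hsum, hP, rfl⟩ := hQ
  rw [frobInner_sum_right]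
  simp only [frobInner_smul_right]
  rw [Complex.re_sum]
  simp only [Complex.re_ofReal_mul]
  calc ∑ i, c i * (frobInner (maxEnt n n) (P i)).re
      ≤ ∑ i, c i * (n : ℝ)⁻¹ := by
        refine Finset.sum_le_sum fun i _ => ?_
        exact mul_le_mul_of_nonneg_left (maxEnt_overlap n hn (hP i)).2 (hc i)
    _ = (n : ℝ)⁻¹ := by rw [← Finset.sum_mul, hsum, one_mul]

end SepFacts

/-- For `n ≥ 2`, `N = n²`, and `E` the maximally entangled pure state
on `ℂⁿ ⊗ ℂⁿ`: every separable state `Q` satisfies `‖E - Q‖ ≥ √((n-1)/(n+1))` in Frobenius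
norm, and the Werner state `W(s)` with `s = 1/(1+n)` attains this:
`‖E - W(s)‖ = √((n-1)/(n+1))`. -/
theorem maxEnt_dist_separable (n : ℕ) (hn : 2 ≤ n) :
    (∀ Q : Matrix (Fin n × Fin n) (Fin n × Fin n) ℂ, IsSeparable2 Q →
        Real.sqrt (((n : ℝ) - 1) / ((n : ℝ) + 1)) ≤ frobNorm (maxEnt n n - Q)) ∧
      frobNorm (maxEnt n n - werner n (1 / (1 + (n : ℝ)))) =
        Real.sqrt (((n : ℝ) - 1) / ((n : ℝ) + 1)) := by
  have hn0 : 0 < n := by omega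
  have hnR : (2 : ℝ) ≤ (n : ℝ) := by exact_mod_cast hn
  have hnC : (n : ℂ) ≠ 0 := Nat.cast_ne_zero.mpr hn0.ne'
  set G : Matrix (Fin n × Fin n) (Fin n × Fin n) ℂ :=
    maxEnt n n - ((n : ℂ) ^ 2)⁻¹ • 1 with hG
  have hE1 : frobInner (maxEnt n n) 1 = 1 := frobInner_maxEnt_one n hn0
  have h1E : frobInner 1 (maxEnt n n) = 1 := by
    rw [frobInner_conj_symm, hE1, star_one]
  have hEE : frobInner (maxEnt n n) (maxEnt n n) = 1 := frobInner_maxEnt_self n hn0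
  have h11 : frobInner (1 : Matrix (Fin n × Fin n) (Fin n × Fin n) ℂ) 1 = (n : ℂ) ^ 2 := by
    rw [frobInner_one_one]
    simp [Fintype.card_prod]
    push_cast
    ring
  have hstarc : (starRingEnd ℂ) ((n : ℂ) ^ 2)⁻¹ = ((n : ℂ) ^ 2)⁻¹ := by
    simp [map_inv₀]
  have hGG : frobInner G G = 1 - ((n : ℂ) ^ 2)⁻¹ := by
    simp only [hG, frobInner_sub_left, frobInner_sub_right, frobInner_smul_left,
      frobInner_smul_right, hEE, hE1, h1E, h11, hstarc]
    field_simp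
    ring
  have hGGre : (frobInner G G).re = 1 - ((n : ℝ) ^ 2)⁻¹ := by
    rw [hGG, show (1 - ((n : ℂ) ^ 2)⁻¹ : ℂ) = ((1 - ((n : ℝ) ^ 2)⁻¹ : ℝ) : ℂ) by
      push_cast; ring, Complex.ofReal_re]
  have hGnorm : frobNorm G = Real.sqrt (1 - ((n : ℝ) ^ 2)⁻¹) := by
    rw [frobNorm, hGGre]
  have hg0 : 0 < Real.sqrt (1 - ((n : ℝ) ^ 2)⁻¹) := by
    apply Real.sqrt_pos.mpr
    have : (4 : ℝ) ≤ (n : ℝ) ^ 2 := by nlinarith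
    have h2 : ((n : ℝ) ^ 2)⁻¹ ≤ 4⁻¹ := by
      apply inv_anti₀ <;> norm_num
      linarith
    norm_num at h2 ⊢
    linarith
  constructor
  · intro Q hQ
    have ht := sep_overlap n hn0 hQ
    have h1Q : frobInner 1 Q = 1 := by rw [frobInner_one_left, sep_trace hQ]
    have hGx : frobInner G (maxEnt n n - Q) = 1 - frobInner (maxEnt n n) Q := by
      simp only [hG, frobInner_sub_left, frobInner_sub_right, frobInner_smul_left,
        hstarc, hEE, h1E, h1Q]
      ring
    have hre : (frobInner G (maxEnt n n - Q)).re = 1 - (frobInner (maxEnt n n) Q).re := by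
      rw [hGx, Complex.sub_re, Complex.one_re]
    have hCS : (frobInner G (maxEnt n n - Q)).re
        ≤ frobNorm G * frobNorm (maxEnt n n - Q) := by
      rw [frobInner_eq, frobNorm_eq, frobNorm_eq]
      exact re_inner_le_norm (𝕜 := ℂ) (toEuc G) (toEuc (maxEnt n n - Q))
    have h1 : ((n : ℝ) - 1) / n ≤ 1 - (frobInner (maxEnt n n) Q).re := by
      have hid : ((n : ℝ) - 1) / n = 1 - (n : ℝ)⁻¹ := by field_simp
      rw [hid]
      linarith
    have hkey : Real.sqrt (((n : ℝ) - 1) / ((n : ℝ) + 1)) *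
        Real.sqrt (1 - ((n : ℝ) ^ 2)⁻¹) = ((n : ℝ) - 1) / n := by
      rw [← Real.sqrt_mul (div_nonneg (by linarith) (by linarith) : (0:ℝ) ≤ ((n : ℝ) - 1) / ((n : ℝ) + 1))]
      rw [show ((n : ℝ) - 1) / ((n : ℝ) + 1) * (1 - ((n : ℝ) ^ 2)⁻¹)
          = (((n : ℝ) - 1) / n) ^ 2 by field_simp; ring]
      exact Real.sqrt_sq (div_nonneg (by linarith) (by linarith))
    have hchain : Real.sqrt (((n : ℝ) - 1) / ((n : ℝ) + 1)) *
        Real.sqrt (1 - ((n : ℝ) ^ 2)⁻¹)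
        ≤ frobNorm (maxEnt n n - Q) * Real.sqrt (1 - ((n : ℝ) ^ 2)⁻¹) := by
      rw [hkey]
      calc ((n : ℝ) - 1) / n ≤ 1 - (frobInner (maxEnt n n) Q).re := h1
        _ = (frobInner G (maxEnt n n - Q)).re := hre.symm
        _ ≤ frobNorm G * frobNorm (maxEnt n n - Q) := hCS
        _ = frobNorm (maxEnt n n - Q) * Real.sqrt (1 - ((n : ℝ) ^ 2)⁻¹) := by
          rw [hGnorm, mul_comm]
    exact le_of_mul_le_mul_right hchain hg0
  · have h1n : (0:ℝ) < 1 + (n : ℝ) := by linarith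
    have hW : maxEnt n n - werner n (1 / (1 + (n : ℝ)))
        = (((1 - 1 / (1 + (n : ℝ)) : ℝ)) : ℂ) • G := by
      rw [werner, hG]
      have hcoef : (((1 - 1 / (1 + (n : ℝ))) / (n : ℝ) ^ 2 : ℝ) : ℂ)
          = (((1 - 1 / (1 + (n : ℝ)) : ℝ)) : ℂ) * ((n : ℂ) ^ 2)⁻¹ := by
        push_cast
        ring
      rw [hcoef]
      have hs : ((1 / (1 + (n : ℝ)) : ℝ) : ℂ)
          = 1 - (((1 - 1 / (1 + (n : ℝ)) : ℝ)) : ℂ) := by push_cast; ring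
      rw [hs]
      module
    have hr0 : (0:ℝ) ≤ 1 - 1 / (1 + (n : ℝ)) := by
      have h : 1 / (1 + (n : ℝ)) ≤ 1 := by
        rw [div_le_one h1n]; linarith
      linarith
    rw [hW, frobNorm, frobInner_smul_left, frobInner_smul_right, Complex.conj_ofReal,
      ← mul_assoc, ← Complex.ofReal_mul, Complex.re_ofReal_mul, hGGre]
    rw [show (1 - 1 / (1 + (n : ℝ))) * (1 - 1 / (1 + (n : ℝ)))
        = (1 - 1 / (1 + (n : ℝ))) ^ 2 by ring]
    rw [Real.sqrt_mul (by positivity), Real.sqrt_sq_eq_abs, abs_of_nonneg hr0]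
    rw [show (1 - 1 / (1 + (n : ℝ))) = Real.sqrt ((1 - 1 / (1 + (n : ℝ))) ^ 2) by
      rw [Real.sqrt_sq hr0]]
    rw [← Real.sqrt_mul (by positivity)]
    congr 1
    field_simp
    ring
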